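/- Let R be a commutative ring and let L, M be finitely generated free R-modules. Let B : M →ₗ[R] M →ₗ[R] R be an alternating (B x x = 0 for all x) perfect bilinear form, and let i : L →ₗ[R] M be an injective linear map whose image is isotropic (B (i l) (i l') = 0 for all l, l' ∈ L). Let p : M →ₗ[R] Module.Dual R L be the map m ↦ (l ↦ B (i l) m), and assume the sequence 0 → L → M → Module.Dual R L → 0 (with maps i and p) is split exact: p is surjective, ker p = range i, and p admits a linear section. Then there exists a linear equivalence u : M ≃ₗ[R] L × Module.Dual R L such that u ∘ i is the canonical inclusion l ↦ (l, 0) and B m m' = (u m').2 ((u m).1) - (u m).2 ((u m').1) for all m, m' ∈ M. That is, a form admitting a Lagrangian L is isomorphic to the hyperbolic form on L. -/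

import Mathlib

/-- An alternating perfect form on a finitely generated free module
admitting a Lagrangian `i : L → M` (split exact `0 → L → M → L* → 0`) is
isomorphic to the hyperbolic form on `L`. -/
theorem stmt2 {R L M : Type*} [CommRing R]
    [AddCommGroup L] [Module R L] [Module.Finite R L] [Module.Free R L]
    [AddCommGroup M] [Module R M] [Module.Finite R M] [Module.Free R M]
    (B : M →ₗ[R] M →ₗ[R] R)
    (halt : ∀ x : M, B x x = 0)
    (hB : Function.Bijective fun x : M => (B x : Module.Dual R M))
    (i : L →ₗ[R] M) (hi : Function.Injective i)
    (hiso : ∀ l l' : L, B (i l) (i l') = 0)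
    (p : M →ₗ[R] Module.Dual R L)
    (hp : ∀ (m : M) (l : L), p m l = B (i l) m)
    (hsurj : Function.Surjective p)
    (hker : LinearMap.ker p = LinearMap.range i)
    (hsplit : ∃ s : Module.Dual R L →ₗ[R] M, p ∘ₗ s = LinearMap.id) :
    ∃ u : M ≃ₗ[R] L × Module.Dual R L,
      (∀ l : L, u (i l) = (l, 0)) ∧
      ∀ m m' : M, B m m' = (u m').2 ((u m).1) - (u m).2 ((u m').1) := by
  classical
  obtain ⟨s, hs⟩ := hsplit
  have hps : ∀ φ, p (s φ) = φ := fun φ => congrFun (congrArg DFunLike.coe hs) φ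
  -- antisymmetry
  have hskew : ∀ x y : M, B x y = - B y x := by
    intro x y
    have h := halt (x + y)
    simp only [map_add, LinearMap.add_apply, halt] at h
    linear_combination h
  -- the defect form C on the dual
  set C : Module.Dual R L →ₗ[R] Module.Dual R L →ₗ[R] R := B.compl₁₂ s s with hCdef
  have hCapp : ∀ φ ψ, C φ ψ = B (s φ) (s ψ) := fun _ _ => rfl
  have hCalt : ∀ φ, C φ φ = 0 := fun φ => halt (s φ)
  have hCskew : ∀ φ ψ, C φ ψ = - C ψ φ := fun φ ψ => hskew _ _
  -- an ordered basis of the dual of L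
  let b : Module.Basis (Fin (Fintype.card (Module.Free.ChooseBasisIndex R L))) R L :=
    (Module.Free.chooseBasis R L).reindex (Fintype.equivFin _)
  let b' := b.dualBasis
  -- "half" of C
  set D : Module.Dual R L →ₗ[R] Module.Dual R L →ₗ[R] R :=
    b'.constr R (fun j => b'.constr R (fun k =>
      if j < k then C (b' j) (b' k) else 0)) with hDdef
  have hDbasis : ∀ j k, D (b' j) (b' k) = if j < k then C (b' j) (b' k) else 0 := by
    intro j k
    rw [hDdef, Module.Basis.constr_basis, Module.Basis.constr_basis]
  have hDC : ∀ φ ψ, D φ ψ - D ψ φ = C φ ψ := by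
    have key : D - D.flip = C := by
      refine b'.ext fun j => b'.ext fun k => ?_
      simp only [LinearMap.sub_apply, LinearMap.flip_apply, hDbasis]
      rcases lt_trichotomy j k with h | h | h
      · simp [h, not_lt.mpr h.le]
      · subst h; simp [hCalt]
      · simp [h, not_lt.mpr h.le, hCskew (b' j) (b' k)]
    intro φ ψ
    have := congrFun (congrArg DFunLike.coe (congrFun (congrArg DFunLike.coe key) φ)) ψ
    simpa using this
  -- correction map h : L* → L
  set h : Module.Dual R L →ₗ[R] L :=
    (Module.evalEquiv R L).symm.toLinearMap ∘ₗ D with hhdef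
  have hh : ∀ φ ψ, ψ (h φ) = D φ ψ := by
    intro φ ψ
    simp [hhdef, Module.apply_evalEquiv_symm_apply]
  -- corrected section
  set s' : Module.Dual R L →ₗ[R] M := s - i ∘ₗ h with hs'def
  have hpi : ∀ l : L, p (i l) = 0 := by
    intro l
    have : i l ∈ LinearMap.ker p := by rw [hker]; exact ⟨l, rfl⟩
    simpa using this
  have hps' : ∀ φ, p (s' φ) = φ := by
    intro φ; simp [hs'def, hps, hpi]
  have hBis' : ∀ (l : L) φ, B (i l) (s' φ) = φ l := by
    intro l φ
    rw [← hp, hps']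
  have hiso' : ∀ φ ψ, B (s' φ) (s' ψ) = 0 := by
    intro φ ψ
    simp only [hs'def, LinearMap.sub_apply, LinearMap.coe_comp, Function.comp_apply,
      map_sub, LinearMap.sub_apply]
    have h1 : B (s φ) (i (h ψ)) = - φ (h ψ) := by
      rw [hskew, ← hp, hps]
    have h2 : B (i (h φ)) (s ψ) = ψ (h φ) := by rw [← hp, hps]
    have h3 : B (i (h φ)) (i (h ψ)) = 0 := hiso _ _
    rw [h1, h2, h3, hh, hh]
    have hd := hDC φ ψ
    have hC := hCapp φ ψ
    linear_combination - hd - hC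
  -- the equivalence
  set f : L × Module.Dual R L →ₗ[R] M := i.coprod s' with hfdef
  have hfapp : ∀ (l : L) (φ : Module.Dual R L), f (l, φ) = i l + s' φ := fun _ _ => rfl
  have hfapp' : ∀ x : L × Module.Dual R L, f x = i x.1 + s' x.2 := fun _ => rfl
  have hbij : Function.Bijective f := by
    constructor
    · intro x y hxy
      have hz : i (x - y).1 + s' (x - y).2 = 0 := by
        rw [← hfapp', map_sub, hxy, sub_self]
      have h2 : (x - y).2 = 0 := by
        have := congrArg p hz
        simpa [hpi, hps'] using this
      have h1 : (x - y).1 = 0 := by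
        rw [h2, map_zero, add_zero] at hz
        exact hi (by simpa using hz)
      have : x - y = 0 := by
        rw [Prod.ext_iff]; exact ⟨h1, h2⟩
      exact sub_eq_zero.mp this
    · intro m
      have : m - s' (p m) ∈ LinearMap.ker p := by simp [hps']
      rw [hker] at this
      obtain ⟨l, hl⟩ := this
      exact ⟨(l, p m), by rw [hfapp, hl]; abel⟩
  set e := LinearEquiv.ofBijective f hbij with hedef
  refine ⟨e.symm, ?_, ?_⟩
  · intro l
    rw [LinearEquiv.symm_apply_eq]
    show i l = f (l, 0)
    rw [hfapp]; simp
  · have key : ∀ x x' : L × Module.Dual R L, B (f x) (f x') = x'.2 x.1 - x.2 x'.1 := by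
      rintro ⟨l, φ⟩ ⟨l', ψ⟩
      rw [hfapp, hfapp]
      simp only [map_add, LinearMap.add_apply]
      have h1 : B (i l) (i l') = 0 := hiso _ _
      have h2 : B (i l) (s' ψ) = ψ l := hBis' _ _
      have h3 : B (s' φ) (i l') = - φ l' := by rw [hskew, hBis']
      have h4 : B (s' φ) (s' ψ) = 0 := hiso' _ _
      rw [h1, h2, h3, h4]
      ring
    intro m m'
    calc B m m' = B (f (e.symm m)) (f (e.symm m')) := by
          rw [show f (e.symm m) = m from e.apply_symm_apply m,
            show f (e.symm m') = m' from e.apply_symm_apply m']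
      _ = (e.symm m').2 (e.symm m).1 - (e.symm m).2 (e.symm m').1 := key _ _
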